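/- Let G be a finite group, K a finite field, and B a block (indecomposable two-sided direct summand) of KG with block idempotent f, so KG = B ⊕ B' with B = fKG. A right ideal C of KG is checkable in KG if and only if, writing C = Cf ⊕ C(1-f), each block component Cf is checkable inside the algebra B and C(1-f) is checkable inside B' (i.e., Cf = {b ∈ B : (fa)b = 0} for some a ∈ KG, and similarly for the complement). -/
import Mathlib

/-- Auxiliary: if `C` is the right annihilator of `v` and `e` is a central idempotent,
then the component `Ce` is the annihilator of `e*v` inside `eR`. -/
lemma stmt18_aux {R : Type*} [Ring R] (e v : R) (he : e * e = e)
    (hc : ∀ x : R, e * x = x * e) (C : Submodule Rᵐᵒᵖ R)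
    (hC : ∀ x, x ∈ C ↔ v * x = 0) :
    {x : R | ∃ c ∈ C, x = c * e} =
      {b : R | (∃ y : R, b = e * y) ∧ (e * v) * b = 0} := by
  ext b
  simp only [Set.mem_setOf_eq]
  constructor
  · rintro ⟨c, hcC, rfl⟩
    have hvc : v * c = 0 := (hC c).mp hcC
    refine ⟨⟨c, (hc c).symm⟩, ?_⟩
    rw [mul_assoc, ← mul_assoc v c e, hvc, zero_mul, mul_zero]
  · rintro ⟨⟨y, rfl⟩, h⟩
    refine ⟨e * y, ?_, ?_⟩
    · rw [hC]
      have : (e * v) * (e * y) = v * (e * y) := by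
        rw [← mul_assoc, ← mul_assoc, hc v, mul_assoc v e e, he]
      rw [← this, h]
    · rw [mul_assoc, ← hc y, ← mul_assoc, he]

theorem stmt18 (K : Type*) [Field K] [Fintype K] (G : Type*) [Group G] [Fintype G]
    (f : MonoidAlgebra K G) (hidem : f * f = f)
    (hcentral : ∀ x : MonoidAlgebra K G, f * x = x * f)
    (C : Submodule (MonoidAlgebra K G)ᵐᵒᵖ (MonoidAlgebra K G)) :
    (∃ v : MonoidAlgebra K G,
        (C : Set (MonoidAlgebra K G)) = {a : MonoidAlgebra K G | v * a = 0}) ↔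
      ((∃ a : MonoidAlgebra K G,
          {x : MonoidAlgebra K G | ∃ c ∈ C, x = c * f} =
            {b : MonoidAlgebra K G |
              (∃ y : MonoidAlgebra K G, b = f * y) ∧ (f * a) * b = 0}) ∧
       (∃ a : MonoidAlgebra K G,
          {x : MonoidAlgebra K G | ∃ c ∈ C, x = c * (1 - f)} =
            {b : MonoidAlgebra K G |
              (∃ y : MonoidAlgebra K G, b = (1 - f) * y) ∧ ((1 - f) * a) * b = 0})) := by
  set g : MonoidAlgebra K G := 1 - f with hgdef
  have hgc : ∀ x : MonoidAlgebra K G, g * x = x * g := by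
    intro x; simp only [hgdef, sub_mul, mul_sub, one_mul, mul_one, hcentral x]
  have hgg : g * g = g := by
    simp only [hgdef, sub_mul, mul_sub, one_mul, mul_one, hidem]
    rw [sub_self, sub_zero]
  have hfg : f * g = 0 := by
    simp only [hgdef, mul_sub, mul_one, hidem]
    rw [sub_self]
  have hgf : g * f = 0 := by rw [hgc f, hfg]
  constructor
  · rintro ⟨v, hv⟩
    have hC : ∀ x, x ∈ C ↔ v * x = 0 := fun x => Set.ext_iff.mp hv x
    exact ⟨⟨v, stmt18_aux f v hidem hcentral C hC⟩,
           ⟨v, stmt18_aux g v hgg hgc C hC⟩⟩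
  · rintro ⟨⟨a₁, h₁⟩, ⟨a₂, h₂⟩⟩
    refine ⟨f * a₁ + g * a₂, ?_⟩
    ext x
    simp only [SetLike.mem_coe, Set.mem_setOf_eq]
    constructor
    · intro hx
      have hxf : x * f ∈ {x : MonoidAlgebra K G | ∃ c ∈ C, x = c * f} := ⟨x, hx, rfl⟩
      have hxg : x * g ∈ {x : MonoidAlgebra K G | ∃ c ∈ C, x = c * g} := ⟨x, hx, rfl⟩
      rw [h₁] at hxf
      rw [h₂] at hxg
      have e₁ : (f * a₁) * x = 0 := by
        have := hxf.2
        rwa [← hcentral x, ← mul_assoc, mul_assoc f a₁ f, ← hcentral a₁,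
          ← mul_assoc, hidem] at this
      have e₂ : (g * a₂) * x = 0 := by
        have := hxg.2
        rwa [← hgc x, ← mul_assoc, mul_assoc g a₂ g, ← hgc a₂,
          ← mul_assoc, hgg] at this
      rw [add_mul, e₁, e₂, add_zero]
    · intro hx
      have e₁ : (f * a₁) * x = 0 := by
        have : f * ((f * a₁ + g * a₂) * x) = 0 := by rw [hx, mul_zero]
        rwa [← mul_assoc, mul_add, ← mul_assoc, ← mul_assoc, hidem, hfg,
          zero_mul, add_zero] at this
      have e₂ : (g * a₂) * x = 0 := by
        have : g * ((f * a₁ + g * a₂) * x) = 0 := by rw [hx, mul_zero]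
        rwa [← mul_assoc, mul_add, ← mul_assoc, ← mul_assoc, hgg, hgf,
          zero_mul, zero_add] at this
      have hfx : f * x ∈ {b : MonoidAlgebra K G |
          (∃ y, b = f * y) ∧ (f * a₁) * b = 0} := by
        refine ⟨⟨x, rfl⟩, ?_⟩
        rw [mul_assoc, ← mul_assoc a₁ f x, ← hcentral a₁, mul_assoc f a₁ x,
          ← mul_assoc f f (a₁ * x), hidem, ← mul_assoc]
        exact e₁
      have hgx : g * x ∈ {b : MonoidAlgebra K G |
          (∃ y, b = g * y) ∧ (g * a₂) * b = 0} := by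
        refine ⟨⟨x, rfl⟩, ?_⟩
        rw [mul_assoc, ← mul_assoc a₂ g x, ← hgc a₂, mul_assoc g a₂ x,
          ← mul_assoc g g (a₂ * x), hgg, ← mul_assoc]
        exact e₂
      rw [← h₁] at hfx
      rw [← h₂] at hgx
      obtain ⟨c₁, hc₁, ec₁⟩ := hfx
      obtain ⟨c₂, hc₂, ec₂⟩ := hgx
      have hx' : x = c₁ * f + c₂ * g := by
        rw [← ec₁, ← ec₂]
        have hfg1 : f + g = 1 := by rw [hgdef]; abel
        calc x = (f + g) * x := by rw [hfg1, one_mul]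
        _ = f * x + g * x := by rw [add_mul]
      rw [hx']
      have m₁ : c₁ * f ∈ C := by
        have := C.smul_mem (MulOpposite.op f) hc₁
        rwa [op_smul_eq_mul] at this
      have m₂ : c₂ * g ∈ C := by
        have := C.smul_mem (MulOpposite.op g) hc₂
        rwa [op_smul_eq_mul] at this
      exact C.add_mem m₁ m₂
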